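/- Let G be a finite abelian group, A ⊆ G symmetric with 0 ∈ A, C ⊆ G, and h : G → ℝ with h(x) ≤ 0 on G\A and ĥ(γ) ≥ 0 for all characters γ. Let Null = {γ : ĥ(γ) = 0}. Suppose K : G → ℂ satisfies Re K(x) ≥ 1 for all x ∈ C, K̂(1) = 0, and K̂(γ) = 0 for all γ ∈ Null, and that ∑_{γ∉Null} |K̂(γ)|²/ĥ(γ) > 0. Then any B ⊆ C with B - B ⊆ (G\A) ∪ {0} satisfies |B| ≤ h(0) / ( ĥ(1) + (∑_{γ∉Null} |K̂(γ)|²/ĥ(γ))⁻¹ ). -/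

import Mathlib

open Finset

/-- Improved Delsarte bound using a second witness function `K` supported
(in Fourier) off the null set of `ĥ`. -/
theorem improved_delsarte_bound {G : Type*} [AddCommGroup G] [Fintype G] [DecidableEq G]
    [DecidableEq (AddChar G ℂ)]
    (A C : Finset G) (hA0 : (0 : G) ∈ A) (hAsymm : ∀ x ∈ A, -x ∈ A)
    (h : G → ℝ) (K : G → ℂ)
    -- Fourier transforms
    (H : AddChar G ℂ → ℂ) (Kf : AddChar G ℂ → ℂ)
    (hH : ∀ γ : AddChar G ℂ, H γ = (∑ x : G, (h x : ℂ) * γ x) / (Fintype.card G : ℂ))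
    (hKf : ∀ γ : AddChar G ℂ, Kf γ = (∑ x : G, K x * γ x) / (Fintype.card G : ℂ))
    (hneg : ∀ x : G, x ∉ A → h x ≤ 0)
    (hft : ∀ γ : AddChar G ℂ, 0 ≤ (H γ).re ∧ (H γ).im = 0)
    (hKC : ∀ x ∈ C, 1 ≤ (K x).re)
    (hK1 : Kf (1 : AddChar G ℂ) = 0)
    (hKnull : ∀ γ : AddChar G ℂ, H γ = 0 → Kf γ = 0)
    (hSpos : 0 < ∑ γ ∈ Finset.univ.filter (fun γ : AddChar G ℂ => H γ ≠ 0),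
      Complex.normSq (Kf γ) / (H γ).re)
    (B : Finset G) (hBC : B ⊆ C)
    (hB : ∀ b ∈ B, ∀ b' ∈ B, b - b' ∉ A ∨ b - b' = 0) :
    (B.card : ℝ) ≤
      h 0 / ((H (1 : AddChar G ℂ)).re +
        (∑ γ ∈ Finset.univ.filter (fun γ : AddChar G ℂ => H γ ≠ 0),
          Complex.normSq (Kf γ) / (H γ).re)⁻¹) := by
  classical
  set n : ℕ := Fintype.card G with hn
  have hn0 : (n : ℂ) ≠ 0 := Nat.cast_ne_zero.2 Fintype.card_ne_zero
  set S : Finset (AddChar G ℂ) := Finset.univ.filter (fun γ : AddChar G ℂ => H γ ≠ 0)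
    with hSdef
  set Q : ℝ := ∑ γ ∈ S, Complex.normSq (Kf γ) / (H γ).re with hQdef
  set Bh : AddChar G ℂ → ℂ := fun γ => ∑ b ∈ B, γ b with hBh
  have hHreal : ∀ γ : AddChar G ℂ, H γ = ((H γ).re : ℂ) := by
    intro γ
    exact Complex.ext (by simp) (by simp [(hft γ).2])
  -- orthogonality workhorse
  have orth : ∀ (f : G → ℂ) (b b' : G),
      ∑ γ : AddChar G ℂ, γ b * (starRingEnd ℂ) (γ b') * ((∑ x : G, f x * γ x) / n)
        = f (b' - b) := by
    intro f b b'
    have step1 : ∀ γ : AddChar G ℂ,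
        γ b * (starRingEnd ℂ) (γ b') * ((∑ x : G, f x * γ x) / n)
          = ∑ x : G, f x * γ (b - b' + x) / n := by
      intro γ
      rw [← AddChar.map_neg_eq_conj, Finset.sum_div, Finset.mul_sum]
      refine Finset.sum_congr rfl fun x _ => ?_
      rw [show b - b' + x = b + (-b' + x) by abel, AddChar.map_add_eq_mul,
        AddChar.map_add_eq_mul]
      ring
    rw [Finset.sum_congr rfl fun γ _ => step1 γ, Finset.sum_comm]
    have hcond : ∀ x : G, (b - b' + x = 0) = (x = b' - b) := by
      intro x
      apply propext
      constructor
      · intro hh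
        have : x = 0 - (b - b') := by rw [← hh]; abel
        rw [this]; abel
      · intro hh; rw [hh]; abel
    have step2 : ∀ x : G, ∑ γ : AddChar G ℂ, f x * γ (b - b' + x) / n
        = if x = b' - b then f x else 0 := by
      intro x
      rw [← Finset.sum_div, ← Finset.mul_sum, AddChar.sum_apply_eq_ite]
      by_cases hx : x = b' - b
      · have h0 : b - b' + x = 0 := by rw [hx]; abel
        rw [if_pos h0, if_pos hx]
        field_simp
        rfl
      · have h0 : b - b' + x ≠ 0 := by
          intro hh
          apply hx
          have : x = 0 - (b - b') := by rw [← hh]; abel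
          rw [this]; abel
        rw [if_neg h0, if_neg hx]
        simp
    rw [Finset.sum_congr rfl fun x _ => step2 x,
      Finset.sum_ite_eq' Finset.univ (b' - b) f]
    simp
  -- key identity
  have eq1 : ∑ γ : AddChar G ℂ, Bh γ * (starRingEnd ℂ) (Bh γ) * H γ
      = ∑ b ∈ B, ∑ b' ∈ B, ((h (b' - b) : ℂ)) := by
    have expand : ∀ γ : AddChar G ℂ, Bh γ * (starRingEnd ℂ) (Bh γ) * H γ
        = ∑ b ∈ B, ∑ b' ∈ B,
            γ b * (starRingEnd ℂ) (γ b') * ((∑ x : G, (h x : ℂ) * γ x) / n) := by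
      intro γ
      rw [hBh, map_sum, hH γ]
      rw [Finset.sum_mul_sum]
      rw [Finset.sum_mul]
      refine Finset.sum_congr rfl fun b _ => ?_
      rw [Finset.sum_mul]
    rw [Finset.sum_congr rfl fun γ _ => expand γ, Finset.sum_comm]
    refine Finset.sum_congr rfl fun b _ => ?_
    rw [Finset.sum_comm]
    exact Finset.sum_congr rfl fun b' _ => orth _ b b'
  have eq1' : ∑ γ : AddChar G ℂ, Complex.normSq (Bh γ) * (H γ).re
      = ∑ b ∈ B, ∑ b' ∈ B, h (b' - b) := by
    have h2 : ((∑ γ : AddChar G ℂ, Complex.normSq (Bh γ) * (H γ).re : ℝ) : ℂ)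
        = ((∑ b ∈ B, ∑ b' ∈ B, h (b' - b) : ℝ) : ℂ) := by
      push_cast
      rw [← eq1]
      refine Finset.sum_congr rfl fun γ _ => ?_
      conv_rhs => rw [hHreal γ]
      rw [Complex.mul_conj]
    exact_mod_cast h2
  -- upper bound on sum of h over differences
  have eq2 : ∑ b ∈ B, ∑ b' ∈ B, h (b' - b) ≤ (B.card : ℝ) * h 0 := by
    have hrow : ∀ b ∈ B, ∑ b' ∈ B, h (b' - b) ≤ h 0 := by
      intro b hb
      rw [← Finset.add_sum_erase _ _ hb, sub_self]
      have : ∑ b' ∈ B.erase b, h (b' - b) ≤ 0 := by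
        refine Finset.sum_nonpos fun b' hb' => ?_
        have hb'B := Finset.mem_of_mem_erase hb'
        have hne : b' - b ≠ 0 := sub_ne_zero.2 (Finset.ne_of_mem_erase hb')
        rcases hB b' hb'B b hb with hnA | h0
        · exact hneg _ hnA
        · exact absurd h0 hne
      linarith
    calc ∑ b ∈ B, ∑ b' ∈ B, h (b' - b) ≤ ∑ _b ∈ B, h 0 := Finset.sum_le_sum hrow
      _ = (B.card : ℝ) * h 0 := by rw [Finset.sum_const, nsmul_eq_mul]
  -- Parseval with K
  have orth2 : ∀ b : G, ∑ γ : AddChar G ℂ, γ b * (starRingEnd ℂ) (Kf γ)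
      = (starRingEnd ℂ) (K b) := by
    intro b
    have step : ∀ γ : AddChar G ℂ, γ b * (starRingEnd ℂ) (Kf γ)
        = ∑ x : G, (starRingEnd ℂ) (K x) * γ (b - x) / n := by
      intro γ
      rw [hKf, map_div₀, map_sum, map_natCast, Finset.sum_div, Finset.mul_sum]
      refine Finset.sum_congr rfl fun x _ => ?_
      rw [map_mul, ← AddChar.map_neg_eq_conj, sub_eq_add_neg, AddChar.map_add_eq_mul]
      ring
    rw [Finset.sum_congr rfl fun γ _ => step γ, Finset.sum_comm]
    have step2 : ∀ x : G, ∑ γ : AddChar G ℂ, (starRingEnd ℂ) (K x) * γ (b - x) / n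
        = if x = b then (starRingEnd ℂ) (K x) else 0 := by
      intro x
      rw [← Finset.sum_div, ← Finset.mul_sum, AddChar.sum_apply_eq_ite]
      by_cases hx : x = b
      · have h0 : b - x = 0 := by rw [hx, sub_self]
        rw [if_pos h0, if_pos hx]
        field_simp
        rfl
      · have h0 : b - x ≠ 0 := fun hh => hx (sub_eq_zero.1 hh).symm
        rw [if_neg h0, if_neg hx]
        simp
    rw [Finset.sum_congr rfl fun x _ => step2 x,
      Finset.sum_ite_eq' Finset.univ b (fun x => (starRingEnd ℂ) (K x))]
    simp
  have eq3 : ∑ γ : AddChar G ℂ, Bh γ * (starRingEnd ℂ) (Kf γ)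
      = ∑ b ∈ B, (starRingEnd ℂ) (K b) := by
    simp only [hBh, Finset.sum_mul]
    rw [Finset.sum_comm]
    exact Finset.sum_congr rfl fun b _ => orth2 b
  have hB1 : (B.card : ℝ) ≤ (∑ γ : AddChar G ℂ, Bh γ * (starRingEnd ℂ) (Kf γ)).re := by
    rw [eq3, Complex.re_sum]
    calc (B.card : ℝ) = ∑ _b ∈ B, (1 : ℝ) := by simp
      _ ≤ ∑ b ∈ B, ((starRingEnd ℂ) (K b)).re := by
          refine Finset.sum_le_sum fun b hb => ?_
          rw [Complex.conj_re]
          exact hKC b (hBC hb)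
  -- restrict the sum to S.erase 1
  have eq4 : ∑ γ : AddChar G ℂ, Bh γ * (starRingEnd ℂ) (Kf γ)
      = ∑ γ ∈ S.erase 1, Bh γ * (starRingEnd ℂ) (Kf γ) := by
    refine (Finset.sum_subset (Finset.subset_univ _) fun γ _ hγ => ?_).symm
    by_cases h1 : H γ = 0
    · rw [hKnull γ h1]; simp
    · have : γ = 1 := by
        by_contra hne
        exact hγ (Finset.mem_erase.2 ⟨hne,
          Finset.mem_filter.2 ⟨Finset.mem_univ _, h1⟩⟩)
      rw [this, hK1]; simp
  have hB2 : (B.card : ℝ) ≤ ∑ γ ∈ S.erase 1,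
      ‖Bh γ‖ * ‖Kf γ‖ := by
    refine hB1.trans ?_
    rw [eq4, Complex.re_sum]
    refine Finset.sum_le_sum fun γ _ => ?_
    calc (Bh γ * (starRingEnd ℂ) (Kf γ)).re ≤ ‖Bh γ * (starRingEnd ℂ) (Kf γ)‖ :=
        Complex.re_le_norm _
      _ = ‖Bh γ‖ * ‖Kf γ‖ := by
          rw [norm_mul, Complex.norm_conj]
  have hpos : ∀ γ ∈ S, 0 < (H γ).re := by
    intro γ hγ
    have hne : H γ ≠ 0 := (Finset.mem_filter.1 hγ).2
    rcases (hft γ) with ⟨h1, h2⟩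
    rcases h1.lt_or_eq with hlt | heq
    · exact hlt
    · exact absurd (Complex.ext (by simp [← heq]) (by simp [h2])) hne
  -- Cauchy–Schwarz
  set T : ℝ := ∑ γ ∈ S.erase 1, Complex.normSq (Bh γ) * (H γ).re with hTdef
  have CS : (∑ γ ∈ S.erase 1, ‖Bh γ‖ * ‖Kf γ‖) ^ 2
      ≤ T * ∑ γ ∈ S.erase 1, Complex.normSq (Kf γ) / (H γ).re := by
    have := Finset.sum_mul_sq_le_sq_mul_sq (S.erase 1)
      (fun γ => ‖Bh γ‖ * Real.sqrt ((H γ).re))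
      (fun γ => ‖Kf γ‖ / Real.sqrt ((H γ).re))
    have e1 : ∀ γ ∈ S.erase 1,
        ‖Bh γ‖ * Real.sqrt ((H γ).re) *
          (‖Kf γ‖ / Real.sqrt ((H γ).re))
        = ‖Bh γ‖ * ‖Kf γ‖ := by
      intro γ hγ
      have hp := hpos γ (Finset.mem_of_mem_erase hγ)
      have hs : Real.sqrt ((H γ).re) ≠ 0 := by positivity
      field_simp
    have e2 : ∀ γ ∈ S.erase 1,
        (‖Bh γ‖ * Real.sqrt ((H γ).re)) ^ 2
        = Complex.normSq (Bh γ) * (H γ).re := by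
      intro γ hγ
      have hp := hpos γ (Finset.mem_of_mem_erase hγ)
      rw [mul_pow, Complex.sq_norm, Real.sq_sqrt hp.le]
    have e3 : ∀ γ ∈ S.erase 1,
        (‖Kf γ‖ / Real.sqrt ((H γ).re)) ^ 2
        = Complex.normSq (Kf γ) / (H γ).re := by
      intro γ hγ
      have hp := hpos γ (Finset.mem_of_mem_erase hγ)
      rw [div_pow, Complex.sq_norm, Real.sq_sqrt hp.le]
    rw [← Finset.sum_congr rfl e1, hTdef, ← Finset.sum_congr rfl e2,
      ← Finset.sum_congr rfl e3]
    exact this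
  have hQ' : ∑ γ ∈ S.erase 1, Complex.normSq (Kf γ) / (H γ).re = Q := by
    rw [hQdef]
    exact Finset.sum_erase _ (by rw [hK1]; simp)
  have hQpos : (0 : ℝ) < Q := hSpos
  have hBsq : (B.card : ℝ) ^ 2 ≤ T * Q := by
    calc (B.card : ℝ) ^ 2 ≤ (∑ γ ∈ S.erase 1, ‖Bh γ‖ * ‖Kf γ‖) ^ 2 :=
        pow_le_pow_left₀ (Nat.cast_nonneg _) hB2 2
      _ ≤ T * Q := by rw [← hQ']; exact CS
  -- total energy bound
  have hmain : (B.card : ℝ) ^ 2 * (H 1).re + T ≤ (B.card : ℝ) * h 0 := by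
    have hBh1 : Bh (1 : AddChar G ℂ) = (B.card : ℂ) := by
      simp [hBh]
    have hterm : Complex.normSq (Bh (1 : AddChar G ℂ)) * (H 1).re
        = (B.card : ℝ) ^ 2 * (H 1).re := by
      rw [hBh1, Complex.normSq_natCast, sq]
    have hsub : Complex.normSq (Bh (1 : AddChar G ℂ)) * (H 1).re + T
        ≤ ∑ γ : AddChar G ℂ, Complex.normSq (Bh γ) * (H γ).re := by
      calc Complex.normSq (Bh (1 : AddChar G ℂ)) * (H 1).re + T
          = ∑ γ ∈ insert (1 : AddChar G ℂ) (S.erase 1),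
              Complex.normSq (Bh γ) * (H γ).re :=
            (Finset.sum_insert (f := fun γ => Complex.normSq (Bh γ) * (H γ).re)
              (Finset.notMem_erase (1 : AddChar G ℂ) S)).symm
        _ ≤ ∑ γ : AddChar G ℂ, Complex.normSq (Bh γ) * (H γ).re :=
            Finset.sum_le_sum_of_subset_of_nonneg (Finset.subset_univ _)
              fun γ _ _ => mul_nonneg (Complex.normSq_nonneg _) (hft γ).1
    rw [hterm] at hsub
    calc (B.card : ℝ) ^ 2 * (H 1).re + T
        ≤ ∑ γ : AddChar G ℂ, Complex.normSq (Bh γ) * (H γ).re := hsub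
      _ = ∑ b ∈ B, ∑ b' ∈ B, h (b' - b) := eq1'
      _ ≤ (B.card : ℝ) * h 0 := eq2
  have hQinv : (0 : ℝ) < Q⁻¹ := inv_pos.2 hQpos
  have hD : (0 : ℝ) < (H 1).re + Q⁻¹ := add_pos_of_nonneg_of_pos (hft 1).1 hQinv
  rcases Nat.eq_zero_or_pos B.card with hc | hc
  · rw [hc]
    have h0nonneg : (0 : ℝ) ≤ h 0 := by
      have hsum : ∑ γ : AddChar G ℂ, H γ = (h 0 : ℂ) := by
        simp only [hH]
        rw [← Finset.sum_div, Finset.sum_comm]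
        have : ∀ x : G, ∑ γ : AddChar G ℂ, (h x : ℂ) * γ x
            = if x = 0 then (h x : ℂ) * n else 0 := by
          intro x
          rw [← Finset.mul_sum, AddChar.sum_apply_eq_ite]
          split_ifs <;> simp [hn]
        rw [Finset.sum_congr rfl fun x _ => this x, Finset.sum_ite_eq' Finset.univ 0
          (fun x => (h x : ℂ) * n)]
        simp [hn0, mul_div_assoc, div_self hn0]
      have : (h 0 : ℝ) = ∑ γ : AddChar G ℂ, (H γ).re := by
        have := congrArg Complex.re hsum
        rw [Complex.re_sum] at this
        simpa using this.symm
      rw [this]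
      exact Finset.sum_nonneg fun γ _ => (hft γ).1
    simpa using div_nonneg h0nonneg hD.le
  · have hcpos : (0 : ℝ) < B.card := by exact_mod_cast hc
    rw [le_div_iff₀ hD]
    have hT : (B.card : ℝ) ^ 2 * Q⁻¹ ≤ T := by
      rw [← div_eq_mul_inv, div_le_iff₀ hQpos]
      exact hBsq
    nlinarith [hmain, hT, hcpos]
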